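/- Let V be a vector space over a field K, Ω a set, and for a, b ∈ Ω let A_{a,b}, B_{a,b}, C_{a,b}, D_{a,b} : V → V be linear maps such that the family Y_{a,b}(x,y) = (A_{a,b}x + B_{a,b}y, C_{a,b}x + D_{a,b}y) satisfies the parametric Yang–Baxter equation. Then for any nonzero scalar l ∈ K, the family Y^l_{a,b}(x,y) = (l·A_{a,b}x + B_{a,b}y, C_{a,b}x + l⁻¹·D_{a,b}y) also satisfies the parametric Yang–Baxter equation. -/

import Mathlib

/-- For a map `Y : V × V → V × V`, the map `Y¹²` acting on the first two factors
of `V × V × V`. -/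
def yb12 {V : Type*} (Y : V × V → V × V) : V × V × V → V × V × V :=
  fun p => ((Y (p.1, p.2.1)).1, (Y (p.1, p.2.1)).2, p.2.2)

/-- For a map `Y : V × V → V × V`, the map `Y¹³` acting on the first and third factors
of `V × V × V`. -/
def yb13 {V : Type*} (Y : V × V → V × V) : V × V × V → V × V × V :=
  fun p => ((Y (p.1, p.2.2)).1, p.2.1, (Y (p.1, p.2.2)).2)

/-- For a map `Y : V × V → V × V`, the map `Y²³` acting on the last two factors
of `V × V × V`. -/
def yb23 {V : Type*} (Y : V × V → V × V) : V × V × V → V × V × V :=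
  fun p => (p.1, (Y (p.2.1, p.2.2)).1, (Y (p.2.1, p.2.2)).2)

/-- `Y` is a Yang–Baxter map: `Y¹² ∘ Y¹³ ∘ Y²³ = Y²³ ∘ Y¹³ ∘ Y¹²`. -/
def IsYB {V : Type*} (Y : V × V → V × V) : Prop :=
  yb12 Y ∘ yb13 Y ∘ yb23 Y = yb23 Y ∘ yb13 Y ∘ yb12 Y

/-- A parametric family `Y a b` satisfies the parametric Yang–Baxter equation:
`Y¹²_{a,b} ∘ Y¹³_{a,c} ∘ Y²³_{b,c} = Y²³_{b,c} ∘ Y¹³_{a,c} ∘ Y¹²_{a,b}` for all `a b c`. -/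
def IsParamYB {V Ω : Type*} (Y : Ω → Ω → V × V → V × V) : Prop :=
  ∀ a b c : Ω, yb12 (Y a b) ∘ yb13 (Y a c) ∘ yb23 (Y b c)
             = yb23 (Y b c) ∘ yb13 (Y a c) ∘ yb12 (Y a b)

theorem stmt11 {K V Ω : Type*} [Field K] [AddCommGroup V] [Module K V]
    (A B C D : Ω → Ω → Module.End K V) (l : K) (hl : l ≠ 0)
    (h : IsParamYB (fun (a b : Ω) (p : V × V) =>
      (A a b p.1 + B a b p.2, C a b p.1 + D a b p.2))) :
    IsParamYB (fun (a b : Ω) (p : V × V) =>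
      (l • A a b p.1 + B a b p.2, C a b p.1 + l⁻¹ • D a b p.2)) := by
  intro a b c
  funext p
  obtain ⟨x, y, z⟩ := p
  have hc := congrFun (h a b c) (l • x, y, l⁻¹ • z)
  simp only [yb12, yb13, yb23, Function.comp_apply, map_add, map_smul, Prod.mk.injEq] at hc ⊢
  obtain ⟨e1, e2, e3⟩ := hc
  refine ⟨?_, ?_, ?_⟩
  · linear_combination (norm := match_scalars <;> field_simp <;> ring) (l:K) • e1
  · linear_combination (norm := match_scalars <;> field_simp <;> ring) e2
  · linear_combination (norm := match_scalars <;> field_simp <;> ring) (l⁻¹:K) • e3
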